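/- Let A be a d × n integer matrix and Θ := ℝ_{≥0}ⁿ with its Borel σ-algebra. Then B(Θ) = σ(A, R_α, Z : α ∈ ker A); that is, the Borel σ-algebra of ℝ_{≥0}ⁿ is generated by the linear map c ↦ Ac together with the functions R_α for α ∈ ker A and the zero-pattern map Z. -/

import Mathlib

open MeasureTheory

noncomputable section

/-- The action of `g ∈ (ℝ_{>0})ᵈ` on `Θ = ℝ_{≥0}ⁿ`: `(g·c)_j = c_j ∏_i g_i^{a_{ij}}`. -/
def actA {d n : ℕ} (A : Matrix (Fin d) (Fin n) ℤ) (g : Fin d → NNReal)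
    (c : Fin n → NNReal) : Fin n → NNReal :=
  fun j => c j * ∏ i, g i ^ (A i j)

/-- `G·B := {g·c : g ∈ (ℝ_{>0})ᵈ, c ∈ B}` for `B ⊆ Θ = ℝ_{≥0}ⁿ`. -/
def GorbitTheta {d n : ℕ} (A : Matrix (Fin d) (Fin n) ℤ) (B : Set (Fin n → NNReal)) :
    Set (Fin n → NNReal) :=
  {x | ∃ g : Fin d → NNReal, (∀ i, 0 < g i) ∧ ∃ c ∈ B, x = actA A g c}

/-- `ker A := {α ∈ ℝⁿ : Aα = 0}`. -/
def kerA {d n : ℕ} (A : Matrix (Fin d) (Fin n) ℤ) : Set (Fin n → ℝ) :=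
  {α | (A.map (Int.cast : ℤ → ℝ)).mulVec α = 0}

open Classical in
/-- The generalized odds ratio `R_α(c) = ∏_{j ∈ J(α)} c_j^{α_j}` if `c_j ≠ 0` for all
`j ∈ J(α)`, and `0` otherwise, where `J(α) = {j : α_j ≠ 0}`. -/
def Rfun {n : ℕ} (α : Fin n → ℝ) (c : Fin n → NNReal) : ℝ :=
  if ∀ j, α j ≠ 0 → c j ≠ 0 then
    ∏ j ∈ Finset.univ.filter (fun j => α j ≠ 0), (c j : ℝ) ^ (α j)
  else 0

/-- The zero pattern `Z(c) ∈ {0,1}ⁿ`, `Z_j(c) = 1` iff `c_j > 0`. -/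
def Zfun {n : ℕ} (c : Fin n → NNReal) : Fin n → ℝ :=
  fun j => if 0 < c j then 1 else 0

open Matrix Classical

/-- Fredholm alternative: a vector orthogonal to the kernel of `M` is in the row space. -/
lemma exists_comb_of_orth {m n : Type*} [Fintype m] [Fintype n]
    (M : Matrix m n ℝ) (w : n → ℝ)
    (h : ∀ α : n → ℝ, M.mulVec α = 0 → dotProduct α w = 0) :
    ∃ v : m → ℝ, ∀ j, w j = ∑ i, M i j * v i := by
  let e : (n → ℝ) ≃ₗ[ℝ] EuclideanSpace ℝ n := (WithLp.linearEquiv 2 ℝ (n → ℝ)).symm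
  let T : (m → ℝ) →ₗ[ℝ] EuclideanSpace ℝ n := e.toLinearMap ∘ₗ Mᵀ.mulVecLin
  let U : Submodule ℝ (EuclideanSpace ℝ n) := LinearMap.range T
  have hU : e w ∈ U := by
    rw [← Submodule.orthogonal_orthogonal U]
    rw [Submodule.mem_orthogonal]
    intro α hα
    set β : n → ℝ := (WithLp.equiv 2 (n → ℝ)) α with hβ
    have hker : M.mulVec β = 0 := by
      have h2 : ∀ v : m → ℝ, dotProduct v (M.mulVec β) = 0 := by
        intro v
        have h3 : dotProduct (Mᵀ.mulVec v) β = 0 := by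
          have h5 := hα (T v) (LinearMap.mem_range_self T v)
          rw [PiLp.inner_apply] at h5
          simp only [RCLike.inner_apply, conj_trivial] at h5
          rw [dotProduct_comm]; exact h5
        rwa [Matrix.mulVec_transpose, ← Matrix.dotProduct_mulVec] at h3
      have := h2 (M.mulVec β)
      simpa [dotProduct_self_eq_zero] using this
    have h6 := h β hker
    rw [PiLp.inner_apply]
    simp only [RCLike.inner_apply, conj_trivial]
    rw [dotProduct_comm] at h6
    exact h6
  obtain ⟨v, hv⟩ := hU
  refine ⟨v, fun j => ?_⟩
  have h4 : Mᵀ.mulVec v = w := e.injective (by simpa [T, Matrix.mulVecLin, Matrix.mulVec_transpose] using hv)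
  rw [← congrFun h4 j]
  simp [Matrix.mulVec, dotProduct, Matrix.transpose_apply]

open Classical in
/-- Stacked matrix: rows of `A` plus indicator rows for the coordinates outside `S`. -/
def stk {d n : ℕ} (A : Matrix (Fin d) (Fin n) ℤ) (S : Finset (Fin n)) :
    Matrix (Fin d ⊕ Fin n) (Fin n) ℝ :=
  Matrix.of (Sum.elim (fun i j => (A i j : ℝ)) (fun k j => if k = j ∧ k ∉ S then 1 else 0))

/-- The kernel vectors of `A` supported inside `S`. -/
def Ksub {d n : ℕ} (A : Matrix (Fin d) (Fin n) ℤ) (S : Finset (Fin n)) :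
    Submodule ℝ (Fin n → ℝ) :=
  LinearMap.ker (stk A S).mulVecLin

open Classical in
/-- A finite spanning family for `Ksub A S`, indexed by `Fin n`. -/
def fam {d n : ℕ} (A : Matrix (Fin d) (Fin n) ℤ) (S : Finset (Fin n)) :
    Fin n → (Fin n → ℝ) :=
  fun k => if h : (k : ℕ) < Module.finrank ℝ (Ksub A S) then
    ((Module.finBasis ℝ (Ksub A S)) ⟨k, h⟩ : Fin n → ℝ) else 0

lemma fam_mem_Ksub {d n : ℕ} (A : Matrix (Fin d) (Fin n) ℤ) (S : Finset (Fin n))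
    (k : Fin n) : fam A S k ∈ Ksub A S := by
  unfold fam
  split
  · exact ((Module.finBasis ℝ (Ksub A S)) _).2
  · exact Submodule.zero_mem _

lemma Ksub_apply {d n : ℕ} (A : Matrix (Fin d) (Fin n) ℤ) (S : Finset (Fin n))
    {α : Fin n → ℝ} (hα : α ∈ Ksub A S) :
    (A.map (Int.cast : ℤ → ℝ)).mulVec α = 0 ∧ ∀ j ∉ S, α j = 0 := by
  have hker : (stk A S).mulVec α = 0 := hα
  constructor
  · funext i
    exact congrFun hker (Sum.inl i)
  · intro j hj
    have := congrFun hker (Sum.inr j)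
    simp only [Matrix.mulVec, dotProduct, stk, Matrix.of_apply, Sum.elim_inr,
      Pi.zero_apply] at this
    simpa [hj, ite_mul] using this

lemma fam_mem_kerA {d n : ℕ} (A : Matrix (Fin d) (Fin n) ℤ) (S : Finset (Fin n))
    (k : Fin n) : fam A S k ∈ kerA A :=
  (Ksub_apply A S (fam_mem_Ksub A S k)).1

lemma Ksub_le_span_fam {d n : ℕ} (A : Matrix (Fin d) (Fin n) ℤ) (S : Finset (Fin n)) :
    Ksub A S ≤ Submodule.span ℝ (Set.range (fam A S)) := by
  have hr : Module.finrank ℝ (Ksub A S) ≤ n := by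
    have := Submodule.finrank_le (Ksub A S)
    rwa [Module.finrank_fin_fun] at this
  intro x hx
  have hx' : (⟨x, hx⟩ : Ksub A S) ∈ (⊤ : Submodule ℝ (Ksub A S)) := trivial
  rw [← Module.Basis.span_eq (Module.finBasis ℝ (Ksub A S))] at hx'
  have : x ∈ Submodule.map (Ksub A S).subtype
      (Submodule.span ℝ (Set.range (Module.finBasis ℝ (Ksub A S)))) :=
    ⟨_, hx', rfl⟩
  rw [Submodule.map_span] at this
  refine Submodule.span_mono ?_ this
  rintro y ⟨z, ⟨i, rfl⟩, rfl⟩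
  refine ⟨⟨(i : ℕ), lt_of_lt_of_le i.isLt hr⟩, ?_⟩
  simp only [fam]
  rw [dif_pos i.isLt]
  simp

lemma Rfun_eq_prod {n : ℕ} (α : Fin n → ℝ) (c : Fin n → NNReal) :
    Rfun α c = ∏ j ∈ Finset.univ.filter (fun j => α j ≠ 0), (c j : ℝ) ^ (α j) := by
  unfold Rfun
  split
  · rfl
  · rename_i h
    push_neg at h
    obtain ⟨j, hj, hcj⟩ := h
    symm
    apply Finset.prod_eq_zero (Finset.mem_filter.2 ⟨Finset.mem_univ j, hj⟩)
    rw [hcj]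
    simp [Real.zero_rpow hj]

lemma Rfun_measurable {n : ℕ} (α : Fin n → ℝ) : Measurable (Rfun α) := by
  have : Rfun α = fun c => ∏ j ∈ Finset.univ.filter (fun j => α j ≠ 0), (c j : ℝ) ^ (α j) :=
    funext (Rfun_eq_prod α)
  rw [this]
  apply Finset.measurable_prod
  intro j _
  exact (measurable_pi_apply j).coe_nnreal_real.pow measurable_const

lemma Zfun_measurable {n : ℕ} : Measurable (Zfun (n := n)) := by
  apply measurable_pi_lambda
  intro j
  exact Measurable.ite (measurableSet_lt measurable_const (measurable_pi_apply j))
    measurable_const measurable_const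

lemma mulVec_measurable {d n : ℕ} (A : Matrix (Fin d) (Fin n) ℤ) :
    Measurable (fun c : Fin n → NNReal =>
      (A.map (Int.cast : ℤ → ℝ)).mulVec (fun j => ((c j : ℝ)))) := by
  apply measurable_pi_lambda
  intro i
  simp only [Matrix.mulVec, dotProduct]
  exact Finset.measurable_sum _ fun j _ =>
    (measurable_const.mul ((measurable_pi_apply j).coe_nnreal_real))

lemma Rfun_exp {n : ℕ} (α : Fin n → ℝ) (c : Fin n → NNReal)
    (h : ∀ j, α j ≠ 0 → c j ≠ 0) :
    Rfun α c = Real.exp (∑ j, α j * Real.log (c j)) := by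
  unfold Rfun
  rw [if_pos h]
  have h1 : ∀ j ∈ Finset.univ.filter (fun j => α j ≠ 0),
      (c j : ℝ) ^ (α j) = Real.exp (α j * Real.log (c j)) := by
    intro j hj
    have hj' : α j ≠ 0 := (Finset.mem_filter.1 hj).2
    have hc : (0 : ℝ) < (c j : ℝ) := by
      have := h j hj'
      positivity
    rw [Real.rpow_def_of_pos hc, mul_comm]
  rw [Finset.prod_congr rfl h1, ← Real.exp_sum]
  congr 1
  apply Finset.sum_subset (Finset.subset_univ _)
  intro j _ hj
  simp only [Finset.mem_filter, Finset.mem_univ, true_and, not_not] at hj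
  simp [hj]

lemma birch_nonneg (s : ℝ) : 0 ≤ s * (Real.exp s - 1) := by
  rcases le_or_gt 0 s with hs | hs
  · have h2 : 1 ≤ Real.exp s := Real.one_le_exp hs
    nlinarith
  · have h2 : Real.exp s ≤ 1 := Real.exp_le_one_iff.2 hs.le
    nlinarith [mul_nonneg (neg_nonneg.2 hs.le) (by linarith : (0:ℝ) ≤ 1 - Real.exp s)]

lemma birch_zero {s : ℝ} (h : s * (Real.exp s - 1) = 0) : s = 0 := by
  rcases mul_eq_zero.1 h with h | h
  · exact h
  · have : Real.exp s = 1 := by linarith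
    exact (Real.exp_eq_one_iff _).1 this

/-- Injectivity of the combined map. -/
lemma F_injective {d n : ℕ} (A : Matrix (Fin d) (Fin n) ℤ) (c c' : Fin n → NNReal)
    (hA : (A.map (Int.cast : ℤ → ℝ)).mulVec (fun j => ((c j : ℝ)))
        = (A.map (Int.cast : ℤ → ℝ)).mulVec (fun j => ((c' j : ℝ))))
    (hR : ∀ S : Finset (Fin n), ∀ k : Fin n, Rfun (fam A S k) c = Rfun (fam A S k) c')
    (hZ : Zfun c = Zfun c') : c = c' := by
  classical
  -- same zero pattern
  have hzero : ∀ j, c j = 0 ↔ c' j = 0 := by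
    intro j
    have := congrFun hZ j
    simp only [Zfun] at this
    constructor
    · intro h
      by_contra h'
      rw [if_neg (by simp [h]), if_pos (pos_iff_ne_zero.2 h')] at this
      norm_num at this
    · intro h
      by_contra h'
      rw [if_pos (pos_iff_ne_zero.2 h'), if_neg (by simp [h])] at this
      norm_num at this
  set S : Finset (Fin n) := Finset.univ.filter (fun j => c j ≠ 0) with hS
  have hmemS : ∀ j, j ∈ S ↔ c j ≠ 0 := by
    intro j; simp [hS]
  set w : Fin n → ℝ := fun j => if c j = 0 then 0 else Real.log (c' j) - Real.log (c j)
    with hw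
  -- generators are orthogonal to w
  have hw_gen : ∀ k : Fin n, dotProduct (fam A S k) w = 0 := by
    intro k
    set α := fam A S k with hα
    have hsupp : ∀ j, j ∉ S → α j = 0 := (Ksub_apply A S (fam_mem_Ksub A S k)).2
    have hcα : ∀ j, α j ≠ 0 → c j ≠ 0 := by
      intro j hj
      by_contra h
      exact hj (hsupp j (by simp [hmemS, h]))
    have hcα' : ∀ j, α j ≠ 0 → c' j ≠ 0 := by
      intro j hj
      exact fun h => hcα j hj ((hzero j).2 h)
    have hRk := hR S k
    rw [Rfun_exp α c hcα, Rfun_exp α c' hcα'] at hRk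
    have hsums : ∑ j, α j * Real.log (c j) = ∑ j, α j * Real.log (c' j) :=
      Real.exp_injective hRk
    have : dotProduct α w = ∑ j, α j * (Real.log (c' j) - Real.log (c j)) := by
      apply Finset.sum_congr rfl
      intro j _
      by_cases hcj : c j = 0
      · have : α j = 0 := hsupp j (by simp [hmemS, hcj])
        simp [this]
      · simp [hw, hcj]
    rw [this]
    simp only [mul_sub, Finset.sum_sub_distrib]
    rw [hsums]
    ring
  -- all kernel vectors are orthogonal to w
  have hspan : ∀ α ∈ Submodule.span ℝ (Set.range (fam A S)), dotProduct α w = 0 := by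
    intro α hα
    induction hα using Submodule.span_induction with
    | mem x hx => obtain ⟨k, rfl⟩ := hx; exact hw_gen k
    | zero => simp [zero_dotProduct]
    | add x y _ _ hx hy => rw [add_dotProduct, hx, hy]; ring
    | smul t x _ hx => rw [smul_dotProduct, hx]; simp
  have horth : ∀ α : Fin n → ℝ, (stk A S).mulVec α = 0 → dotProduct α w = 0 :=
    fun α hαker => hspan α (Ksub_le_span_fam A S hαker)
  obtain ⟨v, hv⟩ := exists_comb_of_orth (stk A S) w horth
  set s : Fin n → ℝ := fun j => ∑ i, (A i j : ℝ) * v (Sum.inl i) with hs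
  -- on S, w = s
  have hws : ∀ j ∈ S, w j = s j := by
    intro j hj
    rw [hv j, Fintype.sum_sum_type]
    have h2 : ∀ k : Fin n, stk A S (Sum.inr k) j * v (Sum.inr k) = 0 := by
      intro k
      simp only [stk, Matrix.of_apply, Sum.elim_inr]
      rcases eq_or_ne k j with rfl | hkj
      · rw [if_neg (by simp [hj]), zero_mul]
      · rw [if_neg (by simp [hkj]), zero_mul]
    simp only [Finset.sum_congr rfl (fun k _ => h2 k), Finset.sum_const_zero, add_zero]
    rfl
  -- multiplicative relation between c' and c on S
  have hc' : ∀ j, c j ≠ 0 → (c' j : ℝ) = (c j : ℝ) * Real.exp (s j) := by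
    intro j hj
    have hj' : c' j ≠ 0 := fun h => hj ((hzero j).2 h)
    have hcpos : (0:ℝ) < (c j : ℝ) := by positivity
    have hcpos' : (0:ℝ) < (c' j : ℝ) := by positivity
    have hwj : w j = Real.log (c' j) - Real.log (c j) := by simp [hw, hj]
    have hsj : Real.log (c' j) - Real.log (c j) = s j := by
      rw [← hwj]; exact hws j ((hmemS j).2 hj)
    have : Real.log (c' j) = Real.log (c j) + s j := by linarith
    calc (c' j : ℝ) = Real.exp (Real.log (c' j)) := (Real.exp_log hcpos').symm
      _ = Real.exp (Real.log (c j)) * Real.exp (s j) := by rw [this, Real.exp_add]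
      _ = (c j : ℝ) * Real.exp (s j) := by rw [Real.exp_log hcpos]
  -- the Birch sum vanishes
  have hAi : ∀ i, ∑ j, (A i j : ℝ) * (((c' j : ℝ)) - c j) = 0 := by
    intro i
    have := congrFun hA i
    simp only [Matrix.mulVec, dotProduct, Matrix.map_apply] at this
    simp only [mul_sub, Finset.sum_sub_distrib, this, sub_self]
  have hsum0 : ∑ j, s j * (((c' j : ℝ)) - c j) = 0 := by
    calc ∑ j, s j * (((c' j : ℝ)) - c j)
        = ∑ j, ∑ i, (A i j : ℝ) * v (Sum.inl i) * (((c' j : ℝ)) - c j) := by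
          apply Finset.sum_congr rfl
          intro j _
          rw [hs, Finset.sum_mul]
      _ = ∑ i, ∑ j, (A i j : ℝ) * v (Sum.inl i) * (((c' j : ℝ)) - c j) :=
          Finset.sum_comm
      _ = ∑ i : Fin d, v (Sum.inl i) * ∑ j, (A i j : ℝ) * (((c' j : ℝ)) - c j) := by
          apply Finset.sum_congr rfl
          intro i _
          rw [Finset.mul_sum]
          apply Finset.sum_congr rfl
          intro j _
          ring
      _ = 0 := by simp [hAi]
  have hterm : ∀ j, s j * (((c' j : ℝ)) - c j) = 0 := by
    have hnonneg : ∀ j ∈ Finset.univ, (0:ℝ) ≤ s j * (((c' j : ℝ)) - c j) := by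
      intro j _
      by_cases hj : c j = 0
      · have hj' : c' j = 0 := (hzero j).1 hj
        simp [hj, hj']
      · have : ((c' j : ℝ)) - c j = (c j : ℝ) * (Real.exp (s j) - 1) := by
          rw [hc' j hj]; ring
        rw [this, show s j * ((c j : ℝ) * (Real.exp (s j) - 1))
            = (c j : ℝ) * (s j * (Real.exp (s j) - 1)) from by ring]
        exact mul_nonneg (c j).2 (birch_nonneg (s j))
    intro j
    exact (Finset.sum_eq_zero_iff_of_nonneg hnonneg).1 hsum0 j (Finset.mem_univ j)
  -- conclude
  funext j
  by_cases hj : c j = 0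
  · rw [hj, ((hzero j).1 hj)]
  · have h1 : ((c' j : ℝ)) - c j = (c j : ℝ) * (Real.exp (s j) - 1) := by
      rw [hc' j hj]; ring
    have h2 := hterm j
    rw [h1] at h2
    have hcpos : (0:ℝ) < (c j : ℝ) := by positivity
    have h3 : s j * (Real.exp (s j) - 1) = 0 := by
      rcases mul_eq_zero.1 (by linarith [h2] : (c j : ℝ) * (s j * (Real.exp (s j) - 1)) = 0)
        with h | h
      · exact absurd h (ne_of_gt hcpos)
      · exact h
    have hs0 : s j = 0 := birch_zero h3
    have : (c' j : ℝ) = (c j : ℝ) := by rw [hc' j hj, hs0]; simp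
    exact (NNReal.coe_injective this).symm

/-- The Borel σ-algebra of `Θ = ℝ_{≥0}ⁿ` is generated by the linear map
`c ↦ Ac`, the generalized odds ratios `R_α` (`α ∈ ker A`), and the zero-pattern map `Z`. -/
theorem borel_eq_generated_A_oddsRatio_zeroPattern {d n : ℕ}
    (A : Matrix (Fin d) (Fin n) ℤ) :
    (inferInstance : MeasurableSpace (Fin n → NNReal)) =
      MeasurableSpace.comap
          (fun c : Fin n → NNReal =>
            (A.map (Int.cast : ℤ → ℝ)).mulVec (fun j => ((c j : ℝ))))
          (inferInstance : MeasurableSpace (Fin d → ℝ)) ⊔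
        (⨆ α ∈ kerA A,
          MeasurableSpace.comap (Rfun α) (inferInstance : MeasurableSpace ℝ)) ⊔
        MeasurableSpace.comap Zfun (inferInstance : MeasurableSpace (Fin n → ℝ)) := by
  classical
  set f₁ : (Fin n → NNReal) → (Fin d → ℝ) :=
    fun c => (A.map (Int.cast : ℤ → ℝ)).mulVec (fun j => ((c j : ℝ))) with hf₁
  set f₂ : (Fin n → NNReal) → ((Finset (Fin n) × Fin n) → ℝ) :=
    fun c p => Rfun (fam A p.1 p.2) c with hf₂
  set F : (Fin n → NNReal) → (Fin d → ℝ) × ((Finset (Fin n) × Fin n) → ℝ) × (Fin n → ℝ) :=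
    fun c => (f₁ c, f₂ c, Zfun c) with hF
  apply le_antisymm
  · -- Borel ≤ generated
    have hFmeas : Measurable F :=
      (mulVec_measurable A).prodMk ((measurable_pi_lambda _ fun (p : Finset (Fin n) × Fin n) =>
        Rfun_measurable (fam A p.1 p.2)).prodMk Zfun_measurable)
    have hFinj : Function.Injective F := by
      intro c c' h
      have h1 : f₁ c = f₁ c' := congrArg Prod.fst h
      have h2 : f₂ c = f₂ c' := congrArg (fun x => x.2.1) h
      have h3 : Zfun c = Zfun c' := congrArg (fun x => x.2.2) h
      exact F_injective A c c' h1 (fun S k => congrFun h2 (S, k)) h3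
    have hemb : MeasurableEmbedding F := hFmeas.measurableEmbedding hFinj
    have le1 : (inferInstance : MeasurableSpace (Fin n → NNReal)) ≤
        MeasurableSpace.comap F inferInstance := by
      intro s hs
      exact ⟨F '' s, hemb.measurableSet_image' hs, hemb.injective.preimage_image s⟩
    refine le1.trans ?_
    have hsplit : MeasurableSpace.comap F
          (inferInstance :
            MeasurableSpace ((Fin d → ℝ) × ((Finset (Fin n) × Fin n) → ℝ) × (Fin n → ℝ)))
        = MeasurableSpace.comap f₁ inferInstance ⊔
            (MeasurableSpace.comap f₂ inferInstance ⊔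
              MeasurableSpace.comap Zfun inferInstance) := by
      show MeasurableSpace.comap F
          (MeasurableSpace.comap Prod.fst inferInstance ⊔ MeasurableSpace.comap Prod.snd
            (MeasurableSpace.comap Prod.fst inferInstance ⊔
              MeasurableSpace.comap Prod.snd inferInstance)) = _
      rw [MeasurableSpace.comap_sup, MeasurableSpace.comap_comp, MeasurableSpace.comap_comp,
        MeasurableSpace.comap_sup, MeasurableSpace.comap_comp, MeasurableSpace.comap_comp]
      rfl
    rw [hsplit]
    refine sup_le ?_ (sup_le ?_ ?_)
    · exact le_sup_of_le_left le_sup_left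
    · refine le_sup_of_le_left (le_sup_of_le_right ?_)
      have hpi : MeasurableSpace.comap f₂
            (inferInstance : MeasurableSpace ((Finset (Fin n) × Fin n) → ℝ))
          = ⨆ p : Finset (Fin n) × Fin n,
              MeasurableSpace.comap (fun c => Rfun (fam A p.1 p.2) c)
                (inferInstance : MeasurableSpace ℝ) := by
        show MeasurableSpace.comap f₂
            (⨆ p, MeasurableSpace.comap (fun x => x p) inferInstance) = _
        rw [MeasurableSpace.comap_iSup]
        refine iSup_congr fun p => ?_
        rw [MeasurableSpace.comap_comp]
        rfl
      rw [hpi]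
      refine iSup_le fun p => ?_
      exact le_iSup₂ (f := fun (α : Fin n → ℝ) (_ : α ∈ kerA A) =>
        MeasurableSpace.comap (Rfun α) (inferInstance : MeasurableSpace ℝ))
        (fam A p.1 p.2) (fam_mem_kerA A p.1 p.2)
    · exact le_sup_right
  · -- generated ≤ Borel
    refine sup_le (sup_le ?_ ?_) ?_
    · exact Measurable.comap_le (mulVec_measurable A)
    · exact iSup₂_le fun α _ => Measurable.comap_le (Rfun_measurable α)
    · exact Measurable.comap_le Zfun_measurable
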